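/- arXiv:1311.6683 — 2 statements merged into one kernel-verified Lean document; each statement's English description precedes it below -/
import Mathlib

section
/- If p satisfies p(0)>0, p(0)+p(1)<1 and μ(p)<1, then p^A satisfies p^A(0)>0, p^A(0)+p^A(1)<1 and μ(p^A)<1; moreover, if ρ(p)=1, or ρ(p)>1 and g'(ρ(p))<1, then the radius of convergence of the generating function g^A of p^A equals ρ(p). -/
open scoped Classical ENNReal

/-- Law of the sum of `n` i.i.d. copies drawn from `q`. -/
noncomputable def sumIid (q : PMF ℕ) : ℕ → PMF ℕ
  | 0 => PMF.pure 0
  | n + 1 => q.bind fun a => (sumIid q n).map fun b => a + b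

/-- Law of `X_A = Σ_{k=1}^{N-1} Y'_k + Y''`. -/
noncomputable def pXA (pN pY' pY'' : PMF ℕ) : PMF ℕ :=
  pN.bind fun n => (sumIid pY' (n - 1)).bind fun s => pY''.map fun y => s + y

noncomputable def pmfE (q : PMF ℕ) (w : ℕ → ℝ≥0∞) : ℝ≥0∞ := ∑' k, q k * w k

lemma pmfE_bind (q : PMF ℕ) (f : ℕ → PMF ℕ) (w : ℕ → ℝ≥0∞) :
    pmfE (q.bind f) w = ∑' a, q a * pmfE (f a) w := by
  unfold pmfE
  simp only [PMF.bind_apply]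
  calc ∑' k, (∑' a, q a * f a k) * w k
      = ∑' k, ∑' a, q a * (f a k * w k) := by
        congr 1; ext k; rw [← ENNReal.tsum_mul_right]; congr 1; ext a; ring
    _ = ∑' a, ∑' k, q a * (f a k * w k) := ENNReal.tsum_comm
    _ = ∑' a, q a * ∑' k, f a k * w k := by
        congr 1; ext a; rw [ENNReal.tsum_mul_left]

lemma pmfE_pure (c : ℕ) (w : ℕ → ℝ≥0∞) : pmfE (PMF.pure c) w = w c := by
  unfold pmfE
  rw [tsum_eq_single c]
  · simp
  · intro b hb; simp [PMF.pure_apply, hb]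

lemma pmfE_map (q : PMF ℕ) (g : ℕ → ℕ) (w : ℕ → ℝ≥0∞) :
    pmfE (q.map g) w = pmfE q (fun a => w (g a)) := by
  rw [PMF.map, pmfE_bind]
  simp only [Function.comp, pmfE_pure]
  rfl

lemma pmfE_pow (q : PMF ℕ) (x : ℝ≥0∞) (n : ℕ) :
    pmfE (sumIid q n) (fun k => x ^ k) = (pmfE q (fun k => x ^ k)) ^ n := by
  induction n with
  | zero => simp [sumIid, pmfE_pure]
  | succ n ih =>
    rw [sumIid, pmfE_bind]
    calc ∑' a, q a * pmfE ((sumIid q n).map fun b => a + b) (fun k => x ^ k)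
        = ∑' a, (q a * x ^ a) * pmfE (sumIid q n) (fun b => x ^ b) := by
          congr 1; ext a
          rw [pmfE_map, mul_assoc]; congr 1
          unfold pmfE
          rw [← ENNReal.tsum_mul_left]
          congr 1; ext b
          simp only [pow_add]; ring
      _ = (pmfE q fun k => x ^ k) ^ (n + 1) := by
          rw [ENNReal.tsum_mul_right, ih, pow_succ, pmfE]
          ring

lemma pmfE_id (q : PMF ℕ) (n : ℕ) :
    pmfE (sumIid q n) (fun k => (k : ℝ≥0∞)) = n * pmfE q (fun k => (k : ℝ≥0∞)) := by
  induction n with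
  | zero => simp [sumIid, pmfE_pure]
  | succ n ih =>
    rw [sumIid, pmfE_bind]
    calc ∑' a, q a * pmfE ((sumIid q n).map fun b => a + b) (fun k => (k : ℝ≥0∞))
        = ∑' a, q a * ((a : ℝ≥0∞) + n * pmfE q (fun k => (k : ℝ≥0∞))) := by
          congr 1; ext a
          rw [pmfE_map]; congr 1
          rw [← ih]
          unfold pmfE
          push_cast
          calc ∑' k, (sumIid q n) k * ((a : ℝ≥0∞) + (k : ℝ≥0∞))
              = ∑' k, ((sumIid q n) k * (a : ℝ≥0∞) + (sumIid q n) k * (k : ℝ≥0∞)) := by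
                congr 1; ext k; ring
            _ = (∑' k, (sumIid q n) k * (a : ℝ≥0∞)) + ∑' k, (sumIid q n) k * (k : ℝ≥0∞) :=
                ENNReal.tsum_add
            _ = (a : ℝ≥0∞) + ∑' k, (sumIid q n) k * (k : ℝ≥0∞) := by
                rw [ENNReal.tsum_mul_right, (sumIid q n).tsum_coe, one_mul]
      _ = (↑(n+1) : ℝ≥0∞) * pmfE q (fun k => (k : ℝ≥0∞)) := by
          calc ∑' a, q a * ((a : ℝ≥0∞) + n * pmfE q (fun k => (k : ℝ≥0∞)))
              = (∑' a, q a * (a:ℝ≥0∞)) + ∑' a, q a * (n * pmfE q (fun k => (k : ℝ≥0∞))) := by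
                rw [← ENNReal.tsum_add]; congr 1; ext a; ring
            _ = pmfE q (fun k => (k:ℝ≥0∞)) + n * pmfE q (fun k => (k : ℝ≥0∞)) := by
                rw [ENNReal.tsum_mul_right, q.tsum_coe, one_mul]; rfl
            _ = (↑(n+1) : ℝ≥0∞) * pmfE q (fun k => (k : ℝ≥0∞)) := by
                push_cast; ring

lemma pmfE_pXA_pow (pN pY' pY'' : PMF ℕ) (x : ℝ≥0∞) :
    pmfE (pXA pN pY' pY'') (fun k => x ^ k)
      = ∑' n, pN n * ((pmfE pY' (fun k => x ^ k)) ^ (n - 1) * pmfE pY'' (fun k => x ^ k)) := by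
  unfold pXA
  rw [pmfE_bind]
  congr 1; ext n
  congr 1
  rw [pmfE_bind]
  calc ∑' s, (sumIid pY' (n-1)) s * pmfE (pY''.map fun y => s + y) (fun k => x ^ k)
      = ∑' s, ((sumIid pY' (n-1)) s * x ^ s) * pmfE pY'' (fun k => x ^ k) := by
        congr 1; ext s
        rw [pmfE_map, mul_assoc]
        congr 1
        unfold pmfE
        rw [← ENNReal.tsum_mul_left]
        congr 1; ext y
        simp only [pow_add]; ring
    _ = (pmfE pY' (fun k => x ^ k)) ^ (n-1) * pmfE pY'' (fun k => x ^ k) := by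
        rw [ENNReal.tsum_mul_right, ← pmfE_pow]; rfl

lemma pmfE_pXA_id (pN pY' pY'' : PMF ℕ) :
    pmfE (pXA pN pY' pY'') (fun k => (k : ℝ≥0∞))
      = ∑' n, pN n * (((n - 1 : ℕ) : ℝ≥0∞) * pmfE pY' (fun k => (k : ℝ≥0∞))
          + pmfE pY'' (fun k => (k : ℝ≥0∞))) := by
  unfold pXA
  rw [pmfE_bind]
  congr 1; ext n
  congr 1
  rw [pmfE_bind]
  calc ∑' s, (sumIid pY' (n-1)) s * pmfE (pY''.map fun y => s + y) (fun k => (k : ℝ≥0∞))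
      = ∑' s, ((sumIid pY' (n-1)) s * (s : ℝ≥0∞)
          + (sumIid pY' (n-1)) s * pmfE pY'' (fun k => (k : ℝ≥0∞))) := by
        congr 1; ext s
        rw [pmfE_map]
        have : pmfE pY'' (fun a => ((s + a : ℕ) : ℝ≥0∞))
            = (s : ℝ≥0∞) + pmfE pY'' (fun k => (k : ℝ≥0∞)) := by
          unfold pmfE
          push_cast
          calc ∑' k, pY'' k * ((s : ℝ≥0∞) + (k : ℝ≥0∞))
              = ∑' k, (pY'' k * (s : ℝ≥0∞) + pY'' k * (k : ℝ≥0∞)) := by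
                congr 1; ext k; ring
            _ = (∑' k, pY'' k * (s : ℝ≥0∞)) + ∑' k, pY'' k * (k : ℝ≥0∞) := ENNReal.tsum_add
            _ = (s : ℝ≥0∞) + ∑' k, pY'' k * (k : ℝ≥0∞) := by
                rw [ENNReal.tsum_mul_right, pY''.tsum_coe, one_mul]
        rw [this]; ring
    _ = ((n - 1 : ℕ) : ℝ≥0∞) * pmfE pY' (fun k => (k : ℝ≥0∞))
          + pmfE pY'' (fun k => (k : ℝ≥0∞)) := by
        rw [ENNReal.tsum_add, ENNReal.tsum_mul_right, (sumIid pY' (n-1)).tsum_coe, one_mul]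
        rw [← pmfE_id]
        rfl

lemma bind_apply_ge (q : PMF ℕ) (f : ℕ → PMF ℕ) (a b : ℕ) :
    q a * f a b ≤ q.bind f b := by
  rw [PMF.bind_apply]; exact ENNReal.le_tsum a

lemma map_apply_ge (q : PMF ℕ) (g : ℕ → ℕ) (a : ℕ) :
    q a ≤ q.map g (g a) := by
  have h : q.map g (g a) = ∑' b, if g a = g b then q b else 0 := by
    rw [PMF.map_apply]
    exact tsum_congr fun b => by by_cases hc : g a = g b <;> simp [hc]
  rw [h]
  have := ENNReal.le_tsum (f := fun b => if g a = g b then q b else 0) a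
  simpa using this

lemma pXA_ge (pN pY' pY'' : PMF ℕ) (n s y : ℕ) :
    pN n * ((sumIid pY' (n-1)) s * pY'' y) ≤ pXA pN pY' pY'' (s + y) := by
  unfold pXA
  refine le_trans ?_ (bind_apply_ge _ _ n _)
  refine mul_le_mul_right ?_ _
  refine le_trans ?_ (bind_apply_ge _ _ s _)
  exact mul_le_mul_right (map_apply_ge pY'' _ y) _

lemma sumIid_self_ge (q : PMF ℕ) (c : ℕ) (n : ℕ) :
    (q c) ^ n ≤ sumIid q n (n * c) := by
  induction n with
  | zero => simp [sumIid]
  | succ n ih =>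
    rw [sumIid]
    have h1 : (n+1) * c = c + n * c := by ring
    rw [h1, pow_succ]
    refine le_trans ?_ (bind_apply_ge _ _ c _)
    rw [mul_comm ((q c)^n) (q c)]
    exact mul_le_mul_right (le_trans ih (map_apply_ge _ _ _)) _


set_option maxHeartbeats 4000000 in
theorem stmt12 (p : ℕ → ℝ) (A : Set ℕ) (ρ : ℝ)
    (hp : ∀ k, 0 ≤ p k) (hpsum : ∑' k, p k = 1)
    (hp0 : 0 < p 0) (hp01 : p 0 + p 1 < 1)
    (h0A : 0 ∈ A) (hApos : 0 < ∑' k : ℕ, A.indicator p k)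
    (hAne : (∑' k : ℕ, A.indicator p k) < 1)
    (hmean : Summable (fun k : ℕ => (k : ℝ) * p k))
    (hsub : ∑' k : ℕ, (k : ℝ) * p k < 1)
    -- `ρ = ρ(p)` is the radius of convergence of the generating function of `p`
    (hρ1 : 1 ≤ ρ)
    (hrad : (∀ r : ℝ, 0 ≤ r → r < ρ → Summable (fun k : ℕ => p k * r ^ k))
      ∧ (∀ r : ℝ, ρ < r → ¬ Summable (fun k : ℕ => p k * r ^ k)))
    -- either `ρ(p) = 1`, or `ρ(p) > 1` and `g'(ρ(p)) < 1`
    (hcase : ρ = 1 ∨ (1 < ρ ∧ Summable (fun k : ℕ => (k : ℝ) * p k * ρ ^ (k - 1))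
        ∧ ∑' k : ℕ, (k : ℝ) * p k * ρ ^ (k - 1) < 1))
    (pN pY' pY'' : PMF ℕ)
    (hN : ∀ n : ℕ, pN n = if 1 ≤ n then
        ENNReal.ofReal ((∑' k : ℕ, A.indicator p k)
          * (1 - ∑' k : ℕ, A.indicator p k) ^ (n - 1)) else 0)
    (hY'' : ∀ k : ℕ, pY'' k = if k ∈ A then
        ENNReal.ofReal (p k / ∑' j : ℕ, A.indicator p j) else 0)
    (hY' : ∀ k : ℕ, pY' k = if (k + 1) ∈ A then 0 else
        ENNReal.ofReal (p (k + 1) / (1 - ∑' j : ℕ, A.indicator p j))) :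
    -- `p^A` satisfies the basic assumptions and is subcritical
    0 < ((pXA pN pY' pY'') 0).toReal
    ∧ ((pXA pN pY' pY'') 0).toReal + ((pXA pN pY' pY'') 1).toReal < 1
    ∧ Summable (fun k : ℕ => (k : ℝ) * ((pXA pN pY' pY'') k).toReal)
    ∧ (∑' k : ℕ, (k : ℝ) * ((pXA pN pY' pY'') k).toReal) < 1
    -- the radius of convergence of `g^A` equals `ρ(p)`
    ∧ (∀ r : ℝ, 0 ≤ r → r < ρ → Summable (fun k : ℕ => ((pXA pN pY' pY'') k).toReal * r ^ k))
    ∧ (∀ r : ℝ, ρ < r → ¬ Summable (fun k : ℕ => ((pXA pN pY' pY'') k).toReal * r ^ k)) := by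
  
  classical
  set a : ℝ := ∑' k : ℕ, A.indicator p k with ha_def
  set P : PMF ℕ := pXA pN pY' pY'' with hP_def
  have ha0 : 0 < a := hApos
  have ha1 : a < 1 := hAne
  have ha1' : 0 < 1 - a := by linarith
  have hPne : ∀ k, P k ≠ ∞ := fun k => (P.apply_ne_top k)
  -- summability of p
  have hsp : Summable p := by
    by_contra h
    rw [tsum_eq_zero_of_not_summable h] at hpsum
    norm_num at hpsum
  -- indicator sums
  have hsA : Summable (A.indicator p) :=
    hsp.of_nonneg_of_le (fun k => Set.indicator_nonneg (fun i _ => hp i) k)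
      (fun k => Set.indicator_le_self' (fun i _ => hp i) k)
  have hsAc : Summable (Aᶜ.indicator p) :=
    hsp.of_nonneg_of_le (fun k => Set.indicator_nonneg (fun i _ => hp i) k)
      (fun k => Set.indicator_le_self' (fun i _ => hp i) k)
  have hAc_sum : ∑' k, Aᶜ.indicator p k = 1 - a := by
    have h1 : (∑' k, A.indicator p k) + (∑' k, Aᶜ.indicator p k) = ∑' k, p k := by
      rw [← hsA.tsum_add hsAc]
      exact tsum_congr fun k => by
        simp [Set.indicator_apply]; split <;> simp [*]
    rw [hpsum] at h1
    linarith [h1]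
  -- lower bound : k ∈ A
  have hlowA : ∀ k ∈ A, ENNReal.ofReal (p k) ≤ P k := by
    intro k hk
    have h := pXA_ge pN pY' pY'' 1 0 k
    rw [zero_add] at h
    refine le_trans (le_of_eq ?_) h
    have h1 : sumIid pY' (1-1) 0 = 1 := by
      norm_num [sumIid, PMF.pure_apply]
    rw [h1, one_mul, hN 1, hY'' k, if_pos hk, if_pos (le_refl 1)]
    norm_num
    rw [← ENNReal.ofReal_mul ha0.le, mul_div_cancel₀ _ (ne_of_gt ha0)]
  -- lower bound : k+1 ∉ A
  have hlowAc : ∀ k : ℕ, (k+1) ∉ A → ENNReal.ofReal (p (k+1) * p 0) ≤ P k := by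
    intro k hk
    have h := pXA_ge pN pY' pY'' 2 k 0
    rw [add_zero] at h
    refine le_trans ?_ h
    have h1 : (pY' k) ≤ sumIid pY' (2-1) k := by
      have := sumIid_self_ge pY' k 1
      simpa using this
    calc ENNReal.ofReal (p (k+1) * p 0)
        = ENNReal.ofReal (a * (1-a)^(2-1)) * (ENNReal.ofReal (p (k+1)/(1-a))
            * ENNReal.ofReal (p 0 / a)) := by
          rw [← ENNReal.ofReal_mul (div_nonneg (hp _) ha1'.le),
            ← ENNReal.ofReal_mul (mul_nonneg ha0.le (pow_nonneg ha1'.le _))]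
          congr 1
          field_simp
          ring
      _ ≤ pN 2 * (sumIid pY' (2-1) k * pY'' 0) := by
          rw [hN 2, if_pos (by norm_num), hY'' 0, if_pos h0A]
          refine mul_le_mul_right (mul_le_mul' ?_ le_rfl) _
          rw [hY' k, if_neg hk] at h1
          exact h1
  -- conclusion 1
  have hP0pos : 0 < (P 0).toReal := by
    have h := hlowA 0 h0A
    exact ENNReal.toReal_pos (fun hz => by
      rw [hz] at h
      exact absurd (le_antisymm h zero_le) (ne_of_gt (ENNReal.ofReal_pos.2 hp0))) (hPne 0)
  -- existence of j ≥ 2 with p j > 0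
  have hj : ∃ j, 2 ≤ j ∧ 0 < p j := by
    by_contra h
    push_neg at h
    have hz : ∀ j ∉ Finset.range 2, p j = 0 := by
      intro j hjr
      have h2 : 2 ≤ j := by simp [Finset.mem_range, not_lt] at hjr; omega
      exact le_antisymm (h j h2) (hp j)
    have he := tsum_eq_sum (L := SummationFilter.unconditional ℕ) hz
    rw [hpsum] at he
    simp [Finset.sum_range_succ] at he
    linarith
  obtain ⟨j, hj2, hjpos⟩ := hj
  have hm : ∃ m, 2 ≤ m ∧ 0 < P m := by
    by_cases hjA : j ∈ A
    · exact ⟨j, hj2, lt_of_lt_of_le (ENNReal.ofReal_pos.2 hjpos) (hlowA j hjA)⟩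
    · refine ⟨2*(j-1), by omega, ?_⟩
      have h := pXA_ge pN pY' pY'' 3 (2*(j-1)) 0
      rw [add_zero] at h
      refine lt_of_lt_of_le ?_ h
      have h1 : (pY' (j-1))^2 ≤ sumIid pY' (3-1) (2*(j-1)) := by
        have := sumIid_self_ge pY' (j-1) 2
        simpa using this
      have hjA' : (j-1)+1 ∉ A := by
        have hjj : (j-1)+1 = j := by omega
        rw [hjj]; exact hjA
      have hq : p ((j-1)+1) = p j := by congr 1; omega
      have e1 : (pN 3) ≠ 0 := by
        rw [hN 3, if_pos (by norm_num)]
        exact ne_of_gt (ENNReal.ofReal_pos.2 (mul_pos ha0 (pow_pos ha1' _)))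
      have e2 : (pY' (j-1)) ≠ 0 := by
        rw [hY' (j-1), if_neg hjA']
        exact ne_of_gt (ENNReal.ofReal_pos.2 (div_pos (hq ▸ hjpos) ha1'))
      have e3 : (pY'' 0) ≠ 0 := by
        rw [hY'' 0, if_pos h0A]
        exact ne_of_gt (ENNReal.ofReal_pos.2 (div_pos hp0 ha0))
      refine lt_of_le_of_lt (le_refl 0) ?_
      refine ENNReal.mul_pos e1 (ne_of_gt (ENNReal.mul_pos (pow_ne_zero _ e2) e3)) |>.trans_le
        (mul_le_mul_right (mul_le_mul' h1 le_rfl) _)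
  obtain ⟨m, hm2, hmpos⟩ := hm
  have hP01 : (P 0).toReal + (P 1).toReal < 1 := by
    have hfin : ∑ k ∈ ({0,1,m} : Finset ℕ), P k ≤ 1 := by
      rw [← P.tsum_coe]
      exact ENNReal.sum_le_tsum _
    rw [show ({0,1,m} : Finset ℕ) = insert 0 (insert 1 {m}) from rfl,
      Finset.sum_insert (by simp; omega), Finset.sum_insert (by simp; omega),
      Finset.sum_singleton] at hfin
    have htr := ENNReal.toReal_mono (by norm_num) hfin
    rw [ENNReal.toReal_add (hPne 0) (ENNReal.add_ne_top.2 ⟨hPne 1, hPne m⟩),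
      ENNReal.toReal_add (hPne 1) (hPne m), ENNReal.toReal_one] at htr
    have hmr : 0 < (P m).toReal := ENNReal.toReal_pos (ne_of_gt hmpos) (hPne m)
    linarith
  -- real mean pieces
  set cA : ℕ → ℝ := fun k => if k ∈ A then (k:ℝ) * p k else 0 with hcA_def
  set cAc : ℕ → ℝ := fun k => if k ∈ A then 0 else (k:ℝ) * p k with hcAc_def
  set w : ℕ → ℝ := fun k => if k ∈ A then 0 else p k with hw_def
  set u : ℕ → ℝ := fun k => if (k+1) ∈ A then 0 else p (k+1) * k with hu_def
  have hcAnn : ∀ k, 0 ≤ cA k := fun k => by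
    by_cases h : k ∈ A <;> simp [hcA_def, h, mul_nonneg (Nat.cast_nonneg k) (hp k)]
  have hcAcnn : ∀ k, 0 ≤ cAc k := fun k => by
    by_cases h : k ∈ A <;> simp [hcAc_def, h, mul_nonneg (Nat.cast_nonneg k) (hp k)]
  have hunn : ∀ k, 0 ≤ u k := fun k => by
    by_cases h : (k+1) ∈ A <;> simp [hu_def, h, mul_nonneg (hp (k+1)) (Nat.cast_nonneg k)]
  have hwnn : ∀ k, 0 ≤ w k := fun k => by
    by_cases h : k ∈ A <;> simp [hw_def, h, hp k]
  have hmnn : ∀ k : ℕ, 0 ≤ (k:ℝ) * p k := fun k => mul_nonneg (Nat.cast_nonneg k) (hp k)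
  have hscA : Summable cA := hmean.of_nonneg_of_le hcAnn (fun k => by
    by_cases h : k ∈ A <;> simp [hcA_def, h, hmnn k])
  have hscAc : Summable cAc := hmean.of_nonneg_of_le hcAcnn (fun k => by
    by_cases h : k ∈ A <;> simp [hcAc_def, h, hmnn k])
  have hweq : w = Aᶜ.indicator p := by
    funext k; by_cases h : k ∈ A <;> simp [hw_def, Set.indicator_apply, h]
  have hsw : Summable w := hweq ▸ hsAc
  have hw_sum : ∑' k, w k = 1 - a := by rw [hweq]; exact hAc_sum
  have hueq : ∀ k, u k = cAc (k+1) - w (k+1) := by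
    intro k
    by_cases h : (k+1) ∈ A
    · simp [hu_def, hcAc_def, hw_def, h]
    · simp only [hu_def, hcAc_def, hw_def, if_neg h]
      push_cast
      ring
  have hscAc1 : Summable (fun k => cAc (k+1)) := (summable_nat_add_iff 1).2 hscAc
  have hsw1 : Summable (fun k => w (k+1)) := (summable_nat_add_iff 1).2 hsw
  have hsu : Summable u := by
    refine Summable.congr (hscAc1.sub hsw1) (fun k => (hueq k).symm)
  have hcAc0 : cAc 0 = 0 := by simp [hcAc_def]
  have hw0 : w 0 = 0 := by simp [hw_def, h0A]
  have hu_sum : ∑' k, u k = (∑' k, cAc k) - (1 - a) := by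
    calc ∑' k, u k = ∑' k, (cAc (k+1) - w (k+1)) := tsum_congr hueq
      _ = (∑' k, cAc (k+1)) - ∑' k, w (k+1) := hscAc1.tsum_sub hsw1
      _ = (∑' k, cAc k) - (1 - a) := by
          have e1 : ∑' k, cAc k = ∑' k, cAc (k+1) := by
            rw [tsum_eq_zero_add' hscAc1, hcAc0, zero_add]
          have e2 : ∑' k, w k = ∑' k, w (k+1) := by
            rw [tsum_eq_zero_add' hsw1, hw0, zero_add]
          rw [← e1, ← e2, hw_sum]
  have hmean_split : (∑' k, cA k) + (∑' k, cAc k) = ∑' k : ℕ, (k:ℝ) * p k := by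
    rw [← hscA.tsum_add hscAc]
    refine tsum_congr fun k => ?_
    by_cases h : k ∈ A <;> simp [hcA_def, hcAc_def, h]
  -- ENNReal mean pieces
  have hm'' : pmfE pY'' (fun k => (k:ℝ≥0∞)) = ENNReal.ofReal ((∑' k, cA k) / a) := by
    unfold pmfE
    have hpt : ∀ k : ℕ, pY'' k * (k:ℝ≥0∞) = ENNReal.ofReal (cA k / a) := by
      intro k
      rw [hY'' k]
      by_cases h : k ∈ A
      · rw [if_pos h, ← ENNReal.ofReal_natCast k,
          ← ENNReal.ofReal_mul (div_nonneg (hp k) ha0.le)]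
        congr 1
        simp [hcA_def, h]
        ring
      · simp [h, hcA_def]
    rw [tsum_congr hpt, ← ENNReal.ofReal_tsum_of_nonneg
      (fun k => div_nonneg (hcAnn k) ha0.le) (hscA.div_const a), tsum_div_const]
  have hm' : pmfE pY' (fun k => (k:ℝ≥0∞)) = ENNReal.ofReal ((∑' k, u k) / (1-a)) := by
    unfold pmfE
    have hpt : ∀ k : ℕ, pY' k * (k:ℝ≥0∞) = ENNReal.ofReal (u k / (1-a)) := by
      intro k
      rw [hY' k]
      by_cases h : (k+1) ∈ A
      · simp [h, hu_def]
      · rw [if_neg h, ← ENNReal.ofReal_natCast k,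
          ← ENNReal.ofReal_mul (div_nonneg (hp (k+1)) ha1'.le)]
        congr 1
        simp [hu_def, h]
        ring
    rw [tsum_congr hpt, ← ENNReal.ofReal_tsum_of_nonneg
      (fun k => div_nonneg (hunn k) ha1'.le) (hsu.div_const _), tsum_div_const]
  have hgeom : Summable (fun n : ℕ => (n:ℝ) * (1-a)^n) := by
    have := summable_pow_mul_geometric_of_norm_lt_one (R := ℝ) 1
      (r := 1-a) (by rw [Real.norm_eq_abs, abs_of_pos ha1']; linarith)
    simpa using this
  have hcN : ∑' n : ℕ, pN n * (((n-1 : ℕ)):ℝ≥0∞) = ENNReal.ofReal ((1-a)/a) := by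
    rw [tsum_eq_zero_add' ENNReal.summable]
    have h0 : pN 0 * (((0-1:ℕ)):ℝ≥0∞) = 0 := by norm_num
    rw [h0, zero_add]
    have hpt : ∀ n : ℕ, pN (n+1) * (((n+1-1:ℕ)):ℝ≥0∞)
        = ENNReal.ofReal (a * (1-a)^n * n) := by
      intro n
      rw [hN (n+1), if_pos (by omega)]
      simp only [Nat.add_sub_cancel]
      rw [← ENNReal.ofReal_natCast n,
        ← ENNReal.ofReal_mul (mul_nonneg ha0.le (pow_nonneg ha1'.le n))]
    rw [tsum_congr hpt, ← ENNReal.ofReal_tsum_of_nonneg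
      (fun n => mul_nonneg (mul_nonneg ha0.le (pow_nonneg ha1'.le n)) (Nat.cast_nonneg n))
      (by
        have := hgeom.mul_left a
        refine this.congr fun n => ?_
        ring)]
    congr 1
    have h1 : ∀ n : ℕ, a * (1-a)^n * n = a * ((n:ℝ) * (1-a)^n) := fun n => by ring
    rw [tsum_congr h1, tsum_mul_left, tsum_coe_mul_geometric_of_norm_lt_one
      (by rw [Real.norm_eq_abs, abs_of_pos ha1']; linarith)]
    have h2 : 1 - (1-a) = a := by ring
    rw [h2]
    field_simp
  have hM : pmfE P (fun k => (k:ℝ≥0∞))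
      = ENNReal.ofReal ((1-a)/a * ((∑' k, u k)/(1-a)) + (∑' k, cA k)/a) := by
    rw [hP_def, pmfE_pXA_id]
    calc ∑' n, pN n * (((n-1:ℕ):ℝ≥0∞) * pmfE pY' (fun k => (k:ℝ≥0∞))
          + pmfE pY'' (fun k => (k:ℝ≥0∞)))
        = ∑' n, (pN n * ((n-1:ℕ):ℝ≥0∞) * pmfE pY' (fun k => (k:ℝ≥0∞))
            + pN n * pmfE pY'' (fun k => (k:ℝ≥0∞))) := by
          congr 1; ext n; ring
      _ = (∑' n, pN n * ((n-1:ℕ):ℝ≥0∞)) * pmfE pY' (fun k => (k:ℝ≥0∞))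
            + (∑' n, pN n) * pmfE pY'' (fun k => (k:ℝ≥0∞)) := by
          rw [ENNReal.tsum_add, ENNReal.tsum_mul_right, ENNReal.tsum_mul_right]
      _ = ENNReal.ofReal ((1-a)/a) * ENNReal.ofReal ((∑' k, u k)/(1-a))
            + 1 * ENNReal.ofReal ((∑' k, cA k)/a) := by
          rw [hcN, hm', hm'', pN.tsum_coe]
      _ = ENNReal.ofReal ((1-a)/a * ((∑' k, u k)/(1-a)) + (∑' k, cA k)/a) := by
          rw [one_mul, ← ENNReal.ofReal_mul (div_nonneg ha1'.le ha0.le),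
            ← ENNReal.ofReal_add (mul_nonneg (div_nonneg ha1'.le ha0.le)
              (div_nonneg (tsum_nonneg hunn) ha1'.le))
              (div_nonneg (tsum_nonneg hcAnn) ha0.le)]
  have hreal : (1-a)/a * ((∑' k, u k)/(1-a)) + (∑' k, cA k)/a < 1 := by
    rw [hu_sum]
    have hμ : (∑' k, cA k) + (∑' k, cAc k) < 1 := by rw [hmean_split]; exact hsub
    have hkey : (1-a)/a * (((∑' k, cAc k) - (1-a))/(1-a)) + (∑' k, cA k)/a
        = ((∑' k, cA k) + (∑' k, cAc k) - (1-a))/a := by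
      field_simp
      ring
    rw [hkey, div_lt_one ha0]
    linarith
  have hMlt : pmfE P (fun k => (k:ℝ≥0∞)) < 1 := by
    rw [hM]; exact ENNReal.ofReal_lt_one.2 hreal
  have hMne : pmfE P (fun k => (k:ℝ≥0∞)) ≠ ∞ := by
    rw [hM]; exact ENNReal.ofReal_ne_top
  have htermne : ∀ k : ℕ, P k * (k:ℝ≥0∞) ≠ ∞ := fun k =>
    ne_top_of_le_ne_top hMne (ENNReal.le_tsum k)
  have hsummean : Summable (fun k : ℕ => (k : ℝ) * (P k).toReal) := by
    have := ENNReal.summable_toReal (f := fun k : ℕ => P k * (k:ℝ≥0∞)) hMne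
    refine this.congr fun k => ?_
    rw [ENNReal.toReal_mul, ENNReal.toReal_natCast]
    ring
  have hsummean_lt : (∑' k : ℕ, (k : ℝ) * (P k).toReal) < 1 := by
    have h1 : (∑' k : ℕ, (k : ℝ) * (P k).toReal)
        = (pmfE P (fun k => (k:ℝ≥0∞))).toReal := by
      rw [pmfE, ENNReal.tsum_toReal_eq htermne]
      refine tsum_congr fun k => ?_
      rw [ENNReal.toReal_mul, ENNReal.toReal_natCast]
      ring
    rw [h1]
    have := ENNReal.toReal_mono (by norm_num) hMlt.le
    rw [ENNReal.toReal_one] at this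
    rcases lt_or_eq_of_le this with h | h
    · exact h
    · exfalso
      have := ENNReal.ofReal_toReal hMne
      rw [h] at this
      simp at this
      rw [this] at hMlt
      exact lt_irrefl _ hMlt
  -- geometric-factor bound
  set c : ℕ → ℝ := fun k => if (k+1) ∈ A then 0 else p (k+1) with hc_def
  have hcnn : ∀ k, 0 ≤ c k := fun k => by
    by_cases h : (k+1) ∈ A <;> simp [hc_def, h, hp (k+1)]
  have hcw : ∀ k, c k = w (k+1) := fun k => rfl
  have hsc0 : Summable c := by
    refine Summable.congr ((summable_nat_add_iff 1).2 hsw) fun k => (hcw k).symm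
  have hc_sum : ∑' k, c k = 1 - a := by
    have e2 : ∑' k, w k = ∑' k, w (k+1) := by
      rw [tsum_eq_zero_add' hsw1, hw0, zero_add]
    rw [tsum_congr hcw, ← e2, hw_sum]
  have hgeo : ∀ r : ℝ, 0 ≤ r → r < ρ →
      Summable (fun k => c k * r^k) ∧ (∑' k, c k * r^k) < 1 := by
    intro r hr hrρ
    by_cases hr1 : r ≤ 1
    · have hb : ∀ k, c k * r^k ≤ c k := fun k => by
        have h1 : r^k ≤ 1 := pow_le_one₀ hr hr1
        nlinarith [hcnn k, pow_nonneg hr k]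
      have hsum : Summable (fun k => c k * r^k) :=
        hsc0.of_nonneg_of_le (fun k => mul_nonneg (hcnn k) (pow_nonneg hr k)) hb
      refine ⟨hsum, lt_of_le_of_lt (hsum.tsum_le_tsum hb hsc0) ?_⟩
      rw [hc_sum]; linarith
    · push_neg at hr1
      have hρgt : 1 < ρ := lt_trans hr1 hrρ
      rcases hcase with h | ⟨_, hsρ, hltρ⟩
      · exfalso; rw [h] at hρgt; linarith
      have hbb : ∀ k, c k * r^k ≤ ((k+1:ℕ):ℝ) * p (k+1) * ρ^k := by
        intro k
        by_cases h : (k+1) ∈ A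
        · simp only [hc_def, if_pos h, zero_mul]
          exact mul_nonneg (mul_nonneg (Nat.cast_nonneg _) (hp _))
            (pow_nonneg (by linarith) k)
        · simp only [hc_def, if_neg h]
          have h1 : r^k ≤ ρ^k := pow_le_pow_left₀ hr hrρ.le k
          have h2 : (1:ℝ) ≤ ((k+1:ℕ):ℝ) := by push_cast; linarith [Nat.cast_nonneg (α := ℝ) k]
          have h3 : p (k+1) * r^k ≤ p (k+1) * ρ^k :=
            mul_le_mul_of_nonneg_left h1 (hp (k+1))
          have h4 : (0:ℝ) ≤ p (k+1) * ρ^k :=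
            mul_nonneg (hp (k+1)) (pow_nonneg (by linarith) k)
          nlinarith
      have hshiftρ : Summable (fun k => ((k+1:ℕ):ℝ) * p (k+1) * ρ^k) := by
        have := (summable_nat_add_iff 1).2 hsρ
        refine this.congr fun k => ?_
        simp
      have hbnn : ∀ k, (0:ℝ) ≤ ((k+1:ℕ):ℝ) * p (k+1) * ρ^k := fun k =>
        mul_nonneg (mul_nonneg (Nat.cast_nonneg _) (hp _)) (pow_nonneg (by linarith) k)
      have hsum : Summable (fun k => c k * r^k) :=
        hshiftρ.of_nonneg_of_le (fun k => mul_nonneg (hcnn k) (pow_nonneg hr k)) hbb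
      refine ⟨hsum, lt_of_le_of_lt (hsum.tsum_le_tsum hbb hshiftρ) ?_⟩
      have hρshift : ∑' k : ℕ, ((k+1:ℕ):ℝ) * p (k+1) * ρ^k
          = ∑' k : ℕ, (k:ℝ) * p k * ρ^(k-1) := by
        rw [tsum_eq_zero_add' ((summable_nat_add_iff 1).2 hsρ)]
        simp
      rw [hρshift]
      exact hltρ
  -- conclusion 5 : convergence below ρ
  have hconv : ∀ r : ℝ, 0 ≤ r → r < ρ → Summable (fun k => (P k).toReal * r^k) := by
    intro r hr hrρ
    obtain ⟨hsumc, hltc⟩ := hgeo r hr hrρ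
    set x : ℝ≥0∞ := ENNReal.ofReal r with hx_def
    set E' := pmfE pY' (fun k => x^k) with hE'_def
    set E'' := pmfE pY'' (fun k => x^k) with hE''_def
    have ht : ENNReal.ofReal (1-a) * E' = ENNReal.ofReal (∑' k, c k * r^k) := by
      rw [hE'_def, pmfE, ← ENNReal.tsum_mul_left,
        ENNReal.ofReal_tsum_of_nonneg (fun k => mul_nonneg (hcnn k) (pow_nonneg hr k)) hsumc]
      refine tsum_congr fun k => ?_
      rw [hY' k]
      by_cases h : (k+1) ∈ A
      · simp [h, hc_def]
      · rw [if_neg h, hx_def, ← ENNReal.ofReal_pow hr,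
          ← ENNReal.ofReal_mul (div_nonneg (hp (k+1)) ha1'.le),
          ← ENNReal.ofReal_mul ha1'.le]
        congr 1
        simp only [hc_def, if_neg h]
        field_simp
    have htlt : ENNReal.ofReal (1-a) * E' < 1 := by
      rw [ht]; exact ENNReal.ofReal_lt_one.2 hltc
    have hE'' : E'' ≤ ENNReal.ofReal ((∑' k, p k * r^k)/a) := by
      rw [hE''_def, pmfE]
      have hsra : Summable (fun k => p k * r^k / a) := (hrad.1 r hr hrρ).div_const a
      calc ∑' k, pY'' k * x^k ≤ ∑' k, ENNReal.ofReal (p k * r^k / a) := by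
            refine ENNReal.tsum_le_tsum fun k => ?_
            rw [hY'' k]
            by_cases h : k ∈ A
            · rw [if_pos h, hx_def, ← ENNReal.ofReal_pow hr,
                ← ENNReal.ofReal_mul (div_nonneg (hp k) ha0.le)]
              refine ENNReal.ofReal_le_ofReal (le_of_eq ?_)
              field_simp
            · simp [h]
        _ = ENNReal.ofReal ((∑' k, p k * r^k)/a) := by
            rw [← ENNReal.ofReal_tsum_of_nonneg
              (fun k => div_nonneg (mul_nonneg (hp k) (pow_nonneg hr k)) ha0.le) hsra,
              tsum_div_const]
    have hE''ne : E'' ≠ ∞ := ne_top_of_le_ne_top ENNReal.ofReal_ne_top hE''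
    have hΦ : pmfE P (fun k => x^k) ≠ ∞ := by
      rw [hP_def, pmfE_pXA_pow]
      rw [tsum_eq_zero_add' ENNReal.summable]
      have h0 : pN 0 * (E'^(0-1) * E'') = 0 := by
        rw [hN 0]; norm_num
      have hpt : ∀ n : ℕ, pN (n+1) * (E'^(n+1-1) * E'')
          = (ENNReal.ofReal a * E'') * (ENNReal.ofReal (1-a) * E')^n := by
        intro n
        rw [hN (n+1), if_pos (by omega)]
        simp only [Nat.add_sub_cancel]
        rw [ENNReal.ofReal_mul ha0.le, ENNReal.ofReal_pow ha1'.le]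
        ring
      rw [h0, zero_add, tsum_congr hpt, ENNReal.tsum_mul_left, ENNReal.tsum_geometric]
      refine ENNReal.mul_ne_top (ENNReal.mul_ne_top ENNReal.ofReal_ne_top hE''ne) ?_
      rw [ENNReal.inv_ne_top]
      intro hz
      rw [tsub_eq_zero_iff_le] at hz
      exact absurd htlt (not_lt.2 hz)
    rw [pmfE] at hΦ
    have := ENNReal.summable_toReal hΦ
    refine this.congr fun k => ?_
    rw [ENNReal.toReal_mul, hx_def, ← ENNReal.ofReal_pow hr, ENNReal.toReal_ofReal
      (pow_nonneg hr k)]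
  -- conclusion 6 : divergence above ρ
  have hdiv : ∀ r : ℝ, ρ < r → ¬ Summable (fun k => (P k).toReal * r^k) := by
    intro r hrρ hS
    have hr0 : (0:ℝ) < r := by linarith
    have hPnn : ∀ k, (0:ℝ) ≤ (P k).toReal := fun k => ENNReal.toReal_nonneg
    have hAk : ∀ k, A.indicator p k * r^k ≤ (P k).toReal * r^k := by
      intro k
      by_cases h : k ∈ A
      · rw [Set.indicator_of_mem h]
        refine mul_le_mul_of_nonneg_right ?_ (pow_nonneg hr0.le k)
        have := ENNReal.toReal_mono (hPne k) (hlowA k h)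
        rwa [ENNReal.toReal_ofReal (hp k)] at this
      · rw [Set.indicator_of_notMem h]
        simpa using mul_nonneg (hPnn k) (pow_nonneg hr0.le k)
    have hsumA : Summable (fun k => A.indicator p k * r^k) :=
      hS.of_nonneg_of_le (fun k => mul_nonneg
        (Set.indicator_nonneg (fun i _ => hp i) k) (pow_nonneg hr0.le k)) hAk
    have hshiftb : ∀ k, c k * r^(k+1) ≤ (r / p 0) * ((P k).toReal * r^k) := by
      intro k
      by_cases h : (k+1) ∈ A
      · simp only [hc_def, if_pos h, zero_mul]
        have := mul_nonneg (hPnn k) (pow_nonneg hr0.le k)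
        positivity
      · simp only [hc_def, if_neg h]
        have hPk := ENNReal.toReal_mono (hPne k) (hlowAc k h)
        rw [ENNReal.toReal_ofReal (mul_nonneg (hp (k+1)) hp0.le)] at hPk
        have key : p (k+1) * r^(k+1) = (r / p 0) * ((p (k+1) * p 0) * r^k) := by
          rw [pow_succ]
          field_simp
        rw [key]
        refine mul_le_mul_of_nonneg_left ?_ (by positivity)
        exact mul_le_mul_of_nonneg_right hPk (pow_nonneg hr0.le k)
    have hsumc : Summable (fun k => c k * r^(k+1)) :=
      (hS.mul_left (r / p 0)).of_nonneg_of_le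
        (fun k => mul_nonneg (hcnn k) (pow_nonneg hr0.le _)) hshiftb
    have hsumAc : Summable (fun k => Aᶜ.indicator p k * r^k) := by
      refine (summable_nat_add_iff 1).1 ?_
      refine hsumc.congr fun k => ?_
      rw [hcw k, hweq]
    have hfull : Summable (fun k => p k * r^k) := by
      refine (hsumA.add hsumAc).congr fun k => ?_
      by_cases h : k ∈ A <;> simp [Set.indicator_apply, h]
    exact hrad.2 r hrρ hfull
  exact ⟨hP0pos, hP01, hsummean, hsummean_lt, hconv, hdiv⟩
end

section
/- Strong ratio limit corollary: let (X_n) be i.i.d. ℕ-valued with aperiodic distribution p satisfying μ(p)≤1 and either μ(p)=1 or E[e^{θX_1}]=∞ for all θ>0, and let S_n = X_1+…+X_n. Assuming the strong ratio limit property lim_n P(S_{n−m}=n−k)/P(S_n=n)=1 for all m,k∈ℤ, one has for all k∈ℤ and ℓ∈ℕ: lim_n (1/P(S_n=n)) Σ_{j≥k} p(j) P(S_n = n+ℓ−j) = Σ_{j≥k} p(j), and lim_n (1/P(S_n=n)) Σ_{j≥k} j·p(j) P(S_n = n+ℓ−j) = 1 − μ(p) + Σ_{j≥k} j·p(j). 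-/
open Filter

/-- `walk p n m = P(S_n = m)` for the random walk with i.i.d. steps of law `p`. -/
noncomputable def walk (p : ℕ → ℝ) : ℕ → ℕ → ℝ
  | 0, m => if m = 0 then 1 else 0
  | n + 1, m => ∑ j ∈ Finset.range (m + 1), p j * walk p n (m - j)

/-- `walkZ p n m`, allowing an integer target (zero for negative targets). -/
noncomputable def walkZ (p : ℕ → ℝ) (n : ℕ) (m : ℤ) : ℝ :=
  if 0 ≤ m then walk p n m.toNat else 0

/-- Version allowing an integer number of steps. -/
noncomputable def walkZZ (p : ℕ → ℝ) (n m : ℤ) : ℝ :=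
  if 0 ≤ n then walkZ p n.toNat m else 0

lemma walk_zero (p : ℕ → ℝ) (m : ℕ) : walk p 0 m = if m = 0 then 1 else 0 := by rw [walk]

lemma walk_succ (p : ℕ → ℝ) (n m : ℕ) :
    walk p (n+1) m = ∑ j ∈ Finset.range (m + 1), p j * walk p n (m - j) := by rw [walk]

lemma walk_nonneg (p : ℕ → ℝ) (hp : ∀ k, 0 ≤ p k) : ∀ n m, 0 ≤ walk p n m := by
  intro n
  induction n with
  | zero => intro m; rw [walk_zero]; split <;> norm_num
  | succ n ih =>
    intro m; rw [walk_succ]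
    exact Finset.sum_nonneg fun j _ => mul_nonneg (hp j) (ih _)

lemma sum_tri (m : ℕ) (g : ℕ → ℕ → ℝ) :
    ∑ j ∈ Finset.range (m+1), ∑ i ∈ Finset.range (m+1-j), g j i
      = ∑ i ∈ Finset.range (m+1), ∑ j ∈ Finset.range (m+1-i), g j i := by
  have key : ∀ (g : ℕ → ℕ → ℝ) (j : ℕ), j ∈ Finset.range (m+1) →
      ∑ i ∈ Finset.range (m+1-j), g j i
        = ∑ i ∈ Finset.range (m+1), if j + i ≤ m then g j i else 0 := by
    intro g j hj
    rw [Finset.mem_range] at hj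
    rw [Finset.sum_congr rfl (g := fun i => if j + i ≤ m then g j i else 0)
      (fun i hi => by rw [Finset.mem_range] at hi; show _ = if j + i ≤ m then g j i else 0; rw [if_pos (by omega)])]
    exact Finset.sum_subset (Finset.range_subset_range.2 (by omega))
      (fun i _ hi => by rw [Finset.mem_range] at hi; rw [if_neg (by omega)])
  rw [Finset.sum_congr rfl (key g), Finset.sum_congr rfl (key (fun i j => g j i))]
  rw [Finset.sum_comm]
  exact Finset.sum_congr rfl fun i _ => Finset.sum_congr rfl fun j _ => by
    by_cases h : j + i ≤ m
    · rw [if_pos h, if_pos (by omega)]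
    · rw [if_neg h, if_neg (by omega)]

lemma keyB (p : ℕ → ℝ) : ∀ (n m : ℕ),
    ((n:ℝ)+1) * ∑ j ∈ Finset.range (m+1), (j:ℝ) * p j * walk p n (m-j)
      = (m:ℝ) * walk p (n+1) m := by
  intro n
  induction n with
  | zero =>
    intro m
    have h1 : ∑ j ∈ Finset.range (m+1), (j:ℝ) * p j * walk p 0 (m-j) = (m:ℝ) * p m := by
      rw [Finset.sum_eq_single m]
      · rw [walk_zero, if_pos (by omega)]; ring
      · intro j hj hne
        rw [Finset.mem_range] at hj
        rw [walk_zero, if_neg (by omega), mul_zero]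
      · intro h; exact absurd (Finset.self_mem_range_succ m) h
    have h2 : walk p 1 m = p m := by
      rw [walk_succ, Finset.sum_eq_single m]
      · rw [walk_zero, if_pos (by omega)]; ring
      · intro j hj hne
        rw [Finset.mem_range] at hj
        rw [walk_zero, if_neg (by omega), mul_zero]
      · intro h; exact absurd (Finset.self_mem_range_succ m) h
    rw [h1, h2]; push_cast; ring
  | succ n ih =>
    intro m
    set T := ∑ j ∈ Finset.range (m+1), (j:ℝ) * p j * walk p (n+1) (m-j) with hT
    have h1 : T = ∑ i ∈ Finset.range (m+1), p i *
        ∑ j ∈ Finset.range ((m-i)+1), (j:ℝ) * p j * walk p n ((m-i)-j) := by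
      rw [hT]
      have e1 : ∀ j ∈ Finset.range (m+1), (j:ℝ) * p j * walk p (n+1) (m-j)
          = ∑ i ∈ Finset.range (m+1-j), (j:ℝ) * p j * (p i * walk p n (m - j - i)) := by
        intro j hj
        rw [Finset.mem_range] at hj
        rw [walk_succ, Finset.mul_sum]
        have : m - j + 1 = m + 1 - j := by omega
        rw [this]
      rw [Finset.sum_congr rfl e1, sum_tri]
      refine Finset.sum_congr rfl fun i hi => ?_
      rw [Finset.mem_range] at hi
      have : m + 1 - i = (m - i) + 1 := by omega
      rw [this, Finset.mul_sum]
      refine Finset.sum_congr rfl fun j hj => ?_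
      have : m - j - i = m - i - j := by omega
      rw [this]; ring
    have h2 : ((n:ℝ)+1) * T
        = ∑ i ∈ Finset.range (m+1), p i * (((m-i:ℕ):ℝ) * walk p (n+1) (m-i)) := by
      rw [h1, Finset.mul_sum]
      refine Finset.sum_congr rfl fun i hi => ?_
      rw [← ih (m-i)]; ring
    have h3 : ∑ i ∈ Finset.range (m+1), p i * (((m-i:ℕ):ℝ) * walk p (n+1) (m-i))
        = (m:ℝ) * walk p (n+2) m - T := by
      have e2 : ∀ i ∈ Finset.range (m+1), p i * (((m-i:ℕ):ℝ) * walk p (n+1) (m-i))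
          = (m:ℝ) * (p i * walk p (n+1) (m-i)) - (i:ℝ) * p i * walk p (n+1) (m-i) := by
        intro i hi
        rw [Finset.mem_range] at hi
        rw [Nat.cast_sub (by omega)]; ring
      rw [Finset.sum_congr rfl e2, Finset.sum_sub_distrib, ← Finset.mul_sum, ← walk_succ]
    rw [← h2] at h3
    have hw : walk p (n+1+1) m = walk p (n+2) m := rfl
    rw [hw]
    push_cast at h3 ⊢
    linarith

lemma walkZ_eq (p : ℕ → ℝ) (n m : ℕ) (j : ℕ) (hj : j ≤ m) :
    walkZ p n ((m:ℤ) - j) = walk p n (m - j) := by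
  rw [walkZ, if_pos (by omega)]
  congr 1
  omega

lemma walkZ_neg (p : ℕ → ℝ) (n : ℕ) (m : ℤ) (hm : m < 0) : walkZ p n m = 0 := by
  rw [walkZ, if_neg (by omega)]

lemma suppA (p : ℕ → ℝ) (n m : ℕ) :
    ∀ j ∉ Finset.range (m+1), p j * walkZ p n ((m:ℤ) - j) = 0 := by
  intro j hj
  rw [Finset.mem_range] at hj
  rw [walkZ_neg p n _ (by omega), mul_zero]

lemma suppB (p : ℕ → ℝ) (n m : ℕ) :
    ∀ j ∉ Finset.range (m+1), (j:ℝ) * p j * walkZ p n ((m:ℤ) - j) = 0 := by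
  intro j hj
  rw [Finset.mem_range] at hj
  rw [walkZ_neg p n _ (by omega), mul_zero]

lemma tsumA (p : ℕ → ℝ) (n m : ℕ) :
    ∑' j : ℕ, p j * walkZ p n ((m:ℤ) - j) = walk p (n+1) m := by
  rw [tsum_eq_sum (suppA p n m), walk_succ]
  exact Finset.sum_congr rfl fun j hj => by
    rw [Finset.mem_range] at hj; rw [walkZ_eq p n m j (by omega)]

lemma tsumB (p : ℕ → ℝ) (n m : ℕ) :
    ∑' j : ℕ, (j:ℝ) * p j * walkZ p n ((m:ℤ) - j)
      = (m:ℝ) * walk p (n+1) m / ((n:ℝ)+1) := by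
  rw [tsum_eq_sum (suppB p n m), eq_div_iff (by positivity), mul_comm, ← keyB p n m]
  congr 1
  exact Finset.sum_congr rfl fun j hj => by
    rw [Finset.mem_range] at hj; rw [walkZ_eq p n m j (by omega)]

lemma tail_tsum (f : ℕ → ℝ) (hf : Summable f) (K : ℕ) :
    ∑' j, (if K ≤ j then f j else 0) = (∑' j, f j) - ∑ j ∈ Finset.range K, f j := by
  have h2 : Summable (fun j => if K ≤ j then 0 else f j) :=
    summable_of_ne_finset_zero (s := Finset.range K)
      (fun j hj => by rw [Finset.mem_range] at hj; rw [if_pos (by omega)])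
  have heq : (fun j => if K ≤ j then f j else 0) = f - (fun j => if K ≤ j then 0 else f j) := by
    funext j; by_cases h : K ≤ j <;> simp [h]
  have h1 : Summable (fun j => if K ≤ j then f j else 0) := by
    rw [heq]; exact hf.sub h2
  have ht : ∑' j, (if K ≤ j then 0 else f j) = ∑ j ∈ Finset.range K, f j := by
    rw [tsum_eq_sum (s := Finset.range K)
      (fun j hj => by rw [Finset.mem_range] at hj; rw [if_pos (by omega)])]
    exact Finset.sum_congr rfl fun j hj => by
      rw [Finset.mem_range] at hj; rw [if_neg (by omega)]
  rw [heq, Pi.sub_def, hf.tsum_sub h2, ht]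

theorem stmt13 (p : ℕ → ℝ)
    (hp : ∀ k, 0 ≤ p k) (hpsum : ∑' k, p k = 1)
    (hmean : Summable (fun k : ℕ => (k : ℝ) * p k))
    (hμle : ∑' k : ℕ, (k : ℝ) * p k ≤ 1)
    -- either `μ(p) = 1` or `E[e^{θ X}] = ∞` for all `θ > 0`
    (hcrit : (∑' k : ℕ, (k : ℝ) * p k) = 1
      ∨ ∀ θ : ℝ, 0 < θ → ¬ Summable (fun k : ℕ => Real.exp (θ * k) * p k))
    -- aperiodicity: `P(S_n = n) > 0` for all large `n`
    (hap : ∃ n₀ : ℕ, ∀ n ≥ n₀, 0 < walk p n n)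
    -- the strong ratio limit property, taken as hypothesis
    (hsrlp : ∀ m k : ℤ, Tendsto
        (fun n : ℕ => walkZZ p ((n : ℤ) - m) ((n : ℤ) - k) / walk p n n) atTop (nhds 1)) :
    ∀ (k : ℤ) (ℓ : ℕ),
      Tendsto (fun n : ℕ =>
          (∑' j : ℕ, if k ≤ (j : ℤ) then p j * walkZ p n ((n : ℤ) + ℓ - j) else 0)
            / walk p n n)
        atTop (nhds (∑' j : ℕ, if k ≤ (j : ℤ) then p j else 0))
      ∧ Tendsto (fun n : ℕ =>
          (∑' j : ℕ, if k ≤ (j : ℤ) then (j : ℝ) * p j * walkZ p n ((n : ℤ) + ℓ - j) else 0)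
            / walk p n n)
        atTop (nhds (1 - (∑' j : ℕ, (j : ℝ) * p j)
          + ∑' j : ℕ, if k ≤ (j : ℤ) then (j : ℝ) * p j else 0)) := by
  have hsummp : Summable p := by
    by_contra h
    rw [tsum_eq_zero_of_not_summable h] at hpsum
    norm_num at hpsum
  intro k ℓ
  set K := k.toNat with hKdef
  have hK : ∀ j : ℕ, (k ≤ (j:ℤ)) ↔ (K ≤ j) := fun j => by omega
  -- per-term limits
  have hterm : ∀ j : ℕ, Tendsto (fun n : ℕ => walkZ p n ((n:ℤ) + ℓ - j) / walk p n n)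
      atTop (nhds 1) := by
    intro j
    refine (hsrlp 0 ((j:ℤ) - ℓ)).congr fun n => ?_
    have h1 : walkZZ p ((n:ℤ) - 0) ((n:ℤ) - ((j:ℤ) - ℓ)) = walkZ p n ((n:ℤ) + ℓ - j) := by
      rw [walkZZ, if_pos (by omega)]
      congr 1 <;> omega
    rw [h1]
  have hfull : Tendsto (fun n : ℕ => walk p (n+1) (n+ℓ) / walk p n n) atTop (nhds 1) := by
    refine (hsrlp (-1) (-(ℓ:ℤ))).congr fun n => ?_
    have h1 : walkZZ p ((n:ℤ) - (-1)) ((n:ℤ) - (-(ℓ:ℤ))) = walk p (n+1) (n+ℓ) := by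
      rw [walkZZ, if_pos (by omega), walkZ, if_pos (by omega)]
      congr 1 <;> omega
    rw [h1]
  have hquot : Tendsto (fun n : ℕ => ((n+ℓ : ℕ):ℝ) / ((n:ℝ)+1)) atTop (nhds 1) := by
    have ha : Tendsto (fun n : ℕ => ((n:ℝ)+1)) atTop atTop :=
      tendsto_atTop_add_const_right atTop 1 tendsto_natCast_atTop_atTop
    have hz : Tendsto (fun n : ℕ => ((ℓ:ℝ)-1) / ((n:ℝ)+1)) atTop (nhds 0) :=
      Tendsto.div_atTop tendsto_const_nhds ha
    have h1 : Tendsto (fun n : ℕ => 1 + ((ℓ:ℝ)-1) / ((n:ℝ)+1)) atTop (nhds 1) := by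
      have := hz.const_add 1
      simpa using this
    refine h1.congr fun n => ?_
    have hn : ((n:ℝ)+1) ≠ 0 := by positivity
    push_cast
    field_simp
    ring
  have hsumlim : Tendsto (fun n : ℕ => ∑ j ∈ Finset.range K,
      p j * (walkZ p n ((n:ℤ) + ℓ - j) / walk p n n)) atTop
      (nhds (∑ j ∈ Finset.range K, p j)) := by
    have := tendsto_finset_sum (Finset.range K)
      (fun j _ => ((hterm j).const_mul (p j)))
    simpa using this
  have hsumlimB : Tendsto (fun n : ℕ => ∑ j ∈ Finset.range K,
      (j:ℝ) * p j * (walkZ p n ((n:ℤ) + ℓ - j) / walk p n n)) atTop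
      (nhds (∑ j ∈ Finset.range K, (j:ℝ) * p j)) := by
    have := tendsto_finset_sum (Finset.range K)
      (fun j _ => ((hterm j).const_mul ((j:ℝ) * p j)))
    simpa [mul_assoc] using this
  have e0 : ∀ (n j : ℕ), ((n:ℤ) + ℓ - j) = (((n+ℓ : ℕ)):ℤ) - j := fun n j => by
    push_cast; ring
  -- identity for the first sum
  have e1 : ∀ n : ℕ, (∑' j : ℕ, if k ≤ (j:ℤ) then p j * walkZ p n ((n:ℤ) + ℓ - j) else 0)
      = walk p (n+1) (n+ℓ) - ∑ j ∈ Finset.range K, p j * walkZ p n ((n:ℤ) + ℓ - j) := by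
    intro n
    have hf : Summable (fun j : ℕ => p j * walkZ p n ((((n+ℓ : ℕ)):ℤ) - j)) :=
      summable_of_ne_finset_zero (suppA p n (n+ℓ))
    calc (∑' j : ℕ, if k ≤ (j:ℤ) then p j * walkZ p n ((n:ℤ) + ℓ - j) else 0)
        = ∑' j : ℕ, if K ≤ j then p j * walkZ p n ((((n+ℓ : ℕ)):ℤ) - j) else 0 :=
          tsum_congr fun j => by rw [e0 n j]; exact if_congr (hK j) rfl rfl
      _ = walk p (n+1) (n+ℓ) - ∑ j ∈ Finset.range K, p j * walkZ p n ((((n+ℓ : ℕ)):ℤ) - j) := by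
          rw [tail_tsum _ hf, tsumA]
      _ = walk p (n+1) (n+ℓ) - ∑ j ∈ Finset.range K, p j * walkZ p n ((n:ℤ) + ℓ - j) := by
          congr 1
  have e2 : ∀ n : ℕ, (∑' j : ℕ, if k ≤ (j:ℤ) then (j:ℝ) * p j * walkZ p n ((n:ℤ) + ℓ - j) else 0)
      = ((n+ℓ : ℕ):ℝ) * walk p (n+1) (n+ℓ) / ((n:ℝ)+1)
        - ∑ j ∈ Finset.range K, (j:ℝ) * p j * walkZ p n ((n:ℤ) + ℓ - j) := by
    intro n
    have hf : Summable (fun j : ℕ => (j:ℝ) * p j * walkZ p n ((((n+ℓ : ℕ)):ℤ) - j)) :=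
      summable_of_ne_finset_zero (suppB p n (n+ℓ))
    calc (∑' j : ℕ, if k ≤ (j:ℤ) then (j:ℝ) * p j * walkZ p n ((n:ℤ) + ℓ - j) else 0)
        = ∑' j : ℕ, if K ≤ j then (j:ℝ) * p j * walkZ p n ((((n+ℓ : ℕ)):ℤ) - j) else 0 :=
          tsum_congr fun j => by rw [e0 n j]; exact if_congr (hK j) rfl rfl
      _ = ((n+ℓ : ℕ):ℝ) * walk p (n+1) (n+ℓ) / ((n:ℝ)+1)
            - ∑ j ∈ Finset.range K, (j:ℝ) * p j * walkZ p n ((((n+ℓ : ℕ)):ℤ) - j) := by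
          rw [tail_tsum _ hf, tsumB]
      _ = ((n+ℓ : ℕ):ℝ) * walk p (n+1) (n+ℓ) / ((n:ℝ)+1)
            - ∑ j ∈ Finset.range K, (j:ℝ) * p j * walkZ p n ((n:ℤ) + ℓ - j) := by
          congr 1
  constructor
  · -- first limit
    have hval : (∑' j : ℕ, if k ≤ (j:ℤ) then p j else 0) = 1 - ∑ j ∈ Finset.range K, p j := by
      rw [tsum_congr fun (j : ℕ) => (if_congr (hK j) rfl rfl :
            (if k ≤ (j:ℤ) then p j else 0) = if K ≤ j then p j else 0),
          tail_tsum p hsummp K, hpsum]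
    rw [hval]
    refine (hfull.sub hsumlim).congr fun n => ?_
    rw [e1 n, sub_div, Finset.sum_div]
    simp only [mul_div_assoc]
  · -- second limit
    have hval : (1 - (∑' j : ℕ, (j:ℝ) * p j) + ∑' j : ℕ, if k ≤ (j:ℤ) then (j:ℝ) * p j else 0)
        = 1 * 1 - ∑ j ∈ Finset.range K, (j:ℝ) * p j := by
      rw [tsum_congr fun (j : ℕ) => (if_congr (hK j) rfl rfl :
            (if k ≤ (j:ℤ) then (j:ℝ) * p j else 0) = if K ≤ j then (j:ℝ) * p j else 0),
          tail_tsum _ hmean K]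
      ring
    rw [hval]
    refine ((hquot.mul hfull).sub hsumlimB).congr fun n => ?_
    rw [e2 n, sub_div, Finset.sum_div]
    simp only [mul_div_assoc]
    ring
end
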